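/- arXiv:2504.10743 — 3 statements merged into one kernel-verified Lean document; each statement's English description precedes it below -/
import Mathlib

section
/- α-close distributions that are not related by a combined shift: For every α > 1, let 𝒟 be the point mass at 1, and let 𝒟' be the distribution of P' where P' = 1/α² with probability 1 − 1/α and P' = 1 with probability 1/α. Then the pair (𝒟, 𝒟') is α-close; moreover, 1/α² < 1/α, so 𝒟' has an atom at a point lying outside the interval [s/α, α·s] for every support point s of 𝒟 (the only support point of 𝒟 being s = 1), and hence 𝒟' cannot be obtained from 𝒟 by a combined shift with parameter α. -/
open MeasureTheory

/-- The (real-valued) tail probability `ℙ_{P ~ μ}(P > x)` of a distribution `μ` on `ℝ`. -/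
noncomputable def tailProb (μ : Measure ℝ) (x : ℝ) : ℝ := (μ (Set.Ioi x)).toReal

/-- A pair of distributions `(μ, μ')` on the nonnegative reals is `α`-close if for all `x ≥ 0`,
`(1/α)·ℙ(P > α·x) ≤ ℙ(P' > x) ≤ α·ℙ(P > x/α)`. -/
def AlphaClose (α : ℝ) (μ μ' : Measure ℝ) : Prop :=
  ∀ x : ℝ, 0 ≤ x →
    (1 / α) * tailProb μ (α * x) ≤ tailProb μ' x ∧ tailProb μ' x ≤ α * tailProb μ (x / α)
lemma tail_dirac (a x : ℝ) : tailProb (Measure.dirac a) x = if x < a then 1 else 0 := by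
  simp only [tailProb, Measure.dirac_apply, Set.indicator, Set.mem_Ioi]
  split <;> simp

lemma tail_mix (c d a b x : ℝ) (hc : 0 ≤ c) (hd : 0 ≤ d) :
    tailProb (ENNReal.ofReal c • Measure.dirac a + ENNReal.ofReal d • Measure.dirac b) x
      = c * (if x < a then 1 else 0) + d * (if x < b then 1 else 0) := by
  simp only [tailProb, Measure.add_apply, Measure.smul_apply, smul_eq_mul,
    Measure.dirac_apply, Set.indicator, Set.mem_Ioi]
  rw [ENNReal.toReal_add (by split <;> simp) (by split <;> simp)]
  split <;> split <;> simp [ENNReal.toReal_ofReal, hc, hd]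

/-- For every `α > 1`, the point mass `𝒟` at `1` and the distribution `𝒟'` taking value
`1/α²` with probability `1 - 1/α` and value `1` with probability `1/α` are α-close;
moreover `1/α² < 1/α`, and `𝒟'` has an atom at `1/α²`, which lies outside the interval
`[s/α, α·s]` for the only support point `s = 1` of `𝒟` — hence `𝒟'` cannot be obtained
from `𝒟` by a combined shift with parameter `α`. -/
theorem alphaClose_not_combinedShift (α : ℝ) (hα : 1 < α) :
    AlphaClose α (Measure.dirac (1 : ℝ))
      (ENNReal.ofReal (1 - 1 / α) • Measure.dirac (1 / α ^ 2)
        + ENNReal.ofReal (1 / α) • Measure.dirac (1 : ℝ)) ∧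
    1 / α ^ 2 < 1 / α ∧
    (ENNReal.ofReal (1 - 1 / α) • Measure.dirac (1 / α ^ 2)
        + ENNReal.ofReal (1 / α) • Measure.dirac (1 : ℝ) : Measure ℝ) {1 / α ^ 2} ≠ 0 ∧
    1 / α ^ 2 ∉ Set.Icc (1 / α) (α * 1) := by
  have hα0 : 0 < α := lt_trans one_pos hα
  have hinv : 1 / α < 1 := by rw [div_lt_one hα0]; exact hα
  have hsq : 1 / α ^ 2 < 1 / α := by
    apply div_lt_div_of_pos_left one_pos hα0
    nlinarith
  have hc : (0:ℝ) ≤ 1 - 1 / α := by linarith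
  have hd : (0:ℝ) ≤ 1 / α := by positivity
  refine ⟨?_, hsq, ?_, ?_⟩
  · intro x hx
    rw [tail_mix _ _ _ _ _ hc hd, tail_dirac, tail_dirac]
    rcases lt_or_ge x (1 / α ^ 2) with h1 | h1
    · have hax : α * x < 1 := by
        calc α * x < α * (1 / α ^ 2) := by
              exact mul_lt_mul_of_pos_left h1 hα0
          _ = 1 / α := by field_simp
          _ < 1 := hinv
      have hxa : x / α < 1 := by
        calc x / α < 1 / α ^ 2 / α := by apply div_lt_div_of_pos_right h1 hα0
          _ ≤ 1 := by rw [div_le_one hα0]; nlinarith [hsq, hinv]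
      have hx1 : x < 1 := lt_trans h1 (lt_trans hsq hinv)
      simp only [if_pos hax, if_pos hxa, if_pos h1, if_pos hx1]
      constructor <;> nlinarith
    · rcases lt_or_ge x 1 with h2 | h2
      · have hxa : x / α < 1 := by
          rw [div_lt_one hα0]; linarith
        have h1' : ¬ x < 1 / α ^ 2 := not_lt.2 h1
        simp only [if_neg h1', if_pos h2, if_pos hxa]
        constructor
        · have : (1/α) * (if α * x < 1 then (1:ℝ) else 0) ≤ 1/α * 1 := by
            apply mul_le_mul_of_nonneg_left _ hd
            split <;> norm_num
          nlinarith [this]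
        · nlinarith
      · have h1' : ¬ x < 1 / α ^ 2 := not_lt.2 h1
        have h2' : ¬ x < 1 := not_lt.2 h2
        have hax : ¬ α * x < 1 := by push_neg; nlinarith
        simp only [if_neg h1', if_neg h2', if_neg hax]
        constructor
        · simp
        · split <;> nlinarith
  · have hne : (1:ℝ) ≠ 1 / α ^ 2 := by
      intro h; rw [← h] at hsq; linarith
    simp only [Measure.add_apply, Measure.smul_apply, smul_eq_mul,
      Measure.dirac_apply, Set.indicator_apply, Set.mem_singleton_iff, Pi.one_apply,
      if_pos rfl, if_neg hne, mul_one, mul_zero, add_zero]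
    simp only [if_true, mul_one]
    rw [Ne, ENNReal.ofReal_eq_zero]
    push_neg
    linarith
  · intro h
    have := h.1
    linarith
end

section
/- Key investment inequality for α-close distributions: Let α ≥ 1 and let (𝒟*, 𝒟̂) be an α-close pair of probability distributions on the nonnegative reals, with P* ~ 𝒟* and P̂ ~ 𝒟̂. Then for all y, q ≥ 0: E[min{P̂ − y, q}·𝟙{P̂ > y}] ≥ (1/α²)·E[min{P* − α·y, α·q}·𝟙{P* > α·y}]. -/
open MeasureTheory

lemma tailProb_anti (μ : Measure ℝ) [IsProbabilityMeasure μ] : Antitone (tailProb μ) := by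
  intro a b hab
  exact ENNReal.toReal_mono (measure_ne_top μ _) (measure_mono (Set.Ioi_subset_Ioi hab))

lemma tailProb_le_one (μ : Measure ℝ) [IsProbabilityMeasure μ] (x : ℝ) : tailProb μ x ≤ 1 := by
  have := prob_le_one (μ := μ) (s := Set.Ioi x)
  simpa [tailProb] using ENNReal.toReal_mono (by simp) this

lemma tailProb_nonneg (μ : Measure ℝ) (x : ℝ) : 0 ≤ tailProb μ x := ENNReal.toReal_nonneg

lemma layer (μ : Measure ℝ) [IsProbabilityMeasure μ] (y q : ℝ) (hq : 0 ≤ q) :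
    ∫ x, Set.indicator (Set.Ioi y) (fun x => min (x - y) q) x ∂μ
      = ∫ t in Set.Ioo 0 q, tailProb μ (y + t) := by
  set f : ℝ → ℝ := Set.indicator (Set.Ioi y) (fun x => min (x - y) q) with hf
  have hmeas : Measurable f := by
    apply Measurable.indicator _ measurableSet_Ioi
    exact (measurable_id.sub measurable_const).min measurable_const
  have hnn : ∀ x, 0 ≤ f x := by
    intro x
    apply Set.indicator_nonneg
    intro a ha
    exact le_min (by linarith [Set.mem_Ioi.mp ha]) hq
  have hbdd : ∀ x, ‖f x‖ ≤ q := by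
    intro x
    rw [Real.norm_eq_abs, abs_of_nonneg (hnn x)]
    by_cases h : x ∈ Set.Ioi y
    · simp [hf, Set.indicator_of_mem h, min_le_right]
    · simp [hf, Set.indicator_of_notMem h, hq]
  have hint : Integrable f μ :=
    (integrable_const q).mono' hmeas.aestronglyMeasurable (Filter.Eventually.of_forall hbdd)
  rw [hint.integral_eq_integral_meas_lt (Filter.Eventually.of_forall hnn)]
  have key : ∀ t ∈ Set.Ioi (0:ℝ),
      μ.real {a : ℝ | t < f a} = (Set.Ioo 0 q).indicator (fun t => tailProb μ (y + t)) t := by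
    intro t ht
    have ht0 : (0:ℝ) < t := ht
    by_cases htq : t < q
    · have hset : {a : ℝ | t < f a} = Set.Ioi (y + t) := by
        ext a
        simp only [Set.mem_setOf_eq, Set.mem_Ioi, hf]
        constructor
        · intro h
          by_cases ha : a ∈ Set.Ioi y
          · rw [Set.indicator_of_mem ha] at h
            have := (lt_min_iff.mp h).1
            linarith
          · rw [Set.indicator_of_notMem ha] at h; linarith
        · intro h
          have ha : a ∈ Set.Ioi y := Set.mem_Ioi.mpr (by linarith)
          rw [Set.indicator_of_mem ha]
          exact lt_min_iff.mpr ⟨by linarith, htq⟩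
      rw [hset, Set.indicator_of_mem (Set.mem_Ioo.mpr ⟨ht0, htq⟩)]
      rfl
    · have hset : {a : ℝ | t < f a} = ∅ := by
        ext a
        simp only [Set.mem_setOf_eq, Set.mem_empty_iff_false, iff_false, not_lt]
        calc f a ≤ q := by
              have := hbdd a; rwa [Real.norm_eq_abs, abs_of_nonneg (hnn a)] at this
          _ ≤ t := not_lt.mp htq
      rw [hset, Set.indicator_of_notMem (by simp [Set.mem_Ioo, htq])]
      simp
  rw [setIntegral_congr_fun measurableSet_Ioi key, setIntegral_indicator measurableSet_Ioo,
    Set.inter_eq_self_of_subset_right Set.Ioo_subset_Ioi_self]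

/-- Key investment inequality for α-close distributions: if `(𝒟*, 𝒟̂)` is α-close,
with `P* ~ 𝒟*` and `P̂ ~ 𝒟̂`, then for all `y, q ≥ 0`,
`E[min{P̂ − y, q}·𝟙{P̂ > y}] ≥ (1/α²)·E[min{P* − α·y, α·q}·𝟙{P* > α·y}]`. -/
theorem investment_inequality (α : ℝ) (hα : 1 ≤ α) (μs μh : Measure ℝ)
    [IsProbabilityMeasure μs] [IsProbabilityMeasure μh]
    (hμs : μs (Set.Iio 0) = 0) (hμh : μh (Set.Iio 0) = 0)
    (hclose : AlphaClose α μs μh) (y q : ℝ) (hy : 0 ≤ y) (hq : 0 ≤ q) :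
    (1 / α ^ 2) * ∫ x, Set.indicator (Set.Ioi (α * y)) (fun x => min (x - α * y) (α * q)) x ∂μs
      ≤ ∫ x, Set.indicator (Set.Ioi y) (fun x => min (x - y) q) x ∂μh := by
  have hα0 : (0:ℝ) < α := lt_of_lt_of_le one_pos hα
  rw [layer μs (α * y) (α * q) (by positivity), layer μh y q hq]
  -- change of variables on the μs side
  have hcov : ∫ s in Set.Ioo 0 (α * q), tailProb μs (α * y + s)
      = α * ∫ t in Set.Ioo 0 q, tailProb μs (α * y + α * t) := by
    rw [← integral_Ioc_eq_integral_Ioo, ← integral_Ioc_eq_integral_Ioo,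
      ← intervalIntegral.integral_of_le (by positivity : (0:ℝ) ≤ α * q),
      ← intervalIntegral.integral_of_le hq]
    have := intervalIntegral.integral_comp_mul_left
      (a := (0:ℝ)) (b := q) (fun s => tailProb μs (α * y + s)) (ne_of_gt hα0)
    rw [mul_zero] at this
    rw [this, smul_eq_mul, ← mul_assoc, mul_inv_cancel₀ (ne_of_gt hα0), one_mul]
  rw [hcov, ← mul_assoc]
  have hconst : 1 / α ^ 2 * α = α⁻¹ := by field_simp
  rw [hconst, ← integral_const_mul]
  have hanti1 : Antitone (fun t : ℝ => α⁻¹ * tailProb μs (α * y + α * t)) := by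
    intro a b hab
    exact mul_le_mul_of_nonneg_left (tailProb_anti μs (by nlinarith)) (by positivity)
  have hanti2 : Antitone (fun t : ℝ => tailProb μh (y + t)) := by
    intro a b hab
    exact tailProb_anti μh (by linarith)
  have hfin : volume (Set.Ioo (0:ℝ) q) ≠ ⊤ := measure_Ioo_lt_top.ne
  have hint1 : IntegrableOn (fun t : ℝ => α⁻¹ * tailProb μs (α * y + α * t)) (Set.Ioo 0 q) := by
    apply Measure.integrableOn_of_bounded (M := 1) hfin
      (hanti1.measurable.aestronglyMeasurable)
    filter_upwards with t
    rw [Real.norm_eq_abs, abs_of_nonneg (mul_nonneg (by positivity) (tailProb_nonneg _ _))]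
    calc α⁻¹ * tailProb μs (α * y + α * t) ≤ 1 * 1 := by
          apply mul_le_mul _ (tailProb_le_one μs _) (tailProb_nonneg _ _) zero_le_one
          rw [inv_le_one_iff₀]; right; exact hα
      _ = 1 := one_mul 1
  have hint2 : IntegrableOn (fun t : ℝ => tailProb μh (y + t)) (Set.Ioo 0 q) := by
    apply Measure.integrableOn_of_bounded (M := 1) hfin
      (hanti2.measurable.aestronglyMeasurable)
    filter_upwards with t
    rw [Real.norm_eq_abs, abs_of_nonneg (tailProb_nonneg _ _)]
    exact tailProb_le_one μh _
  apply setIntegral_mono_on hint1 hint2 measurableSet_Ioo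
  intro t ht
  have hx : 0 ≤ y + t := by linarith [ht.1]
  have := (hclose (y + t) hx).1
  rw [mul_add] at this
  calc α⁻¹ * tailProb μs (α * y + α * t) = 1 / α * tailProb μs (α * y + α * t) := by
        rw [one_div]
    _ ≤ tailProb μh (y + t) := this
end

section
/- The Gittins rank is maximized at a quantum ending at a support point: Let 𝒟 be a probability distribution on the nonnegative reals with finite support, let P ~ 𝒟, and let y ≥ 0 satisfy ℙ(P > y) > 0. For q > 0 define the rank R(q) = ℙ(y < P ≤ y + q) / E[min{P − y, q}·𝟙{P > y}] (the denominator is positive for q > 0 since ℙ(P > y) > 0). Then there exists q* > 0 such that y + q* is a support point of 𝒟 and R(q*) ≥ R(q) for all q > 0. -/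
open MeasureTheory

/-- The Gittins rank is maximized at a quantum ending at a support point: let `μ` be a
finitely supported distribution on the nonnegative reals, `y ≥ 0` with `ℙ(P > y) > 0`,
and for `q > 0` let the rank be
`R(q) = ℙ(y < P ≤ y + q) / E[min{P − y, q}·𝟙{P > y}]`. Then there is `q* > 0` such that
`y + q*` is a support point of `μ` (an atom of positive mass) and `R(q*) ≥ R(q)` for
every `q > 0`. -/
theorem rank_max_at_support_point (μ : Measure ℝ) [IsProbabilityMeasure μ]
    (hnn : μ (Set.Iio 0) = 0)
    (hfin : ∃ S : Finset ℝ, μ ((↑S : Set ℝ)ᶜ) = 0)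
    (y : ℝ) (hy : 0 ≤ y) (hty : 0 < (μ (Set.Ioi y)).toReal) :
    ∃ qs : ℝ, 0 < qs ∧ μ {y + qs} ≠ 0 ∧
      ∀ q : ℝ, 0 < q →
        (μ (Set.Ioc y (y + q))).toReal
            / ∫ x, Set.indicator (Set.Ioi y) (fun x => min (x - y) q) x ∂μ ≤
          (μ (Set.Ioc y (y + qs))).toReal
            / ∫ x, Set.indicator (Set.Ioi y) (fun x => min (x - y) qs) x ∂μ := by
  classical
  obtain ⟨S, hS⟩ := hfin
  -- μ is a finite combination of diracs
  have hμ : μ = ∑ s ∈ S, μ {s} • Measure.dirac s := by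
    ext A hA
    rw [Measure.finset_sum_apply]
    have h1 : μ A = μ (A ∩ ↑S) := by
      have h2 : μ (A \ ↑S) = 0 :=
        measure_mono_null (fun x hx => hx.2) hS
      have h4 := measure_inter_add_diff (μ := μ) A (S.measurableSet)
      rw [← h4, h2, add_zero]
    have h3 : A ∩ ↑S = ⋃ s ∈ S.filter (· ∈ A), ({s} : Set ℝ) := by
      ext x
      simp only [Set.mem_inter_iff, Set.mem_iUnion, Finset.mem_filter, Set.mem_singleton_iff]
      constructor
      · rintro ⟨hxA, hxS⟩; exact ⟨x, ⟨hxS, hxA⟩, rfl⟩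
      · rintro ⟨s, ⟨hsS, hsA⟩, rfl⟩; exact ⟨hsA, hsS⟩
    rw [h1, h3, measure_biUnion_finset]
    · rw [Finset.sum_filter]
      apply Finset.sum_congr rfl
      intro s hs
      rw [Measure.smul_apply, Measure.dirac_apply' _ hA, smul_eq_mul]
      by_cases h : s ∈ A
      · simp [h, Set.indicator_of_mem]
      · simp [h, Set.indicator_of_notMem]
    · intro a _ b _ hab
      simp [Set.disjoint_singleton, hab]
    · intro b _; exact measurableSet_singleton b
  set w : ℝ → ℝ := fun s => (μ {s}).toReal with hw
  have hwnn : ∀ s, 0 ≤ w s := fun s => ENNReal.toReal_nonneg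
  have hwz : ∀ s, w s = 0 ↔ μ {s} = 0 := by
    intro s
    simp [hw, ENNReal.toReal_eq_zero_iff, measure_ne_top μ {s}]
  -- set-measure formula
  have hset : ∀ A : Set ℝ, MeasurableSet A →
      (μ A).toReal = ∑ s ∈ S, (if s ∈ A then w s else 0) := by
    intro A hA
    rw [hμ, Measure.finset_sum_apply, ENNReal.toReal_sum]
    · apply Finset.sum_congr rfl
      intro s hs
      rw [Measure.smul_apply, Measure.dirac_apply' _ hA, smul_eq_mul]
      by_cases h : s ∈ A
      · simp [h, Set.indicator_of_mem, hw]
      · simp [h, Set.indicator_of_notMem]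
    · intro s hs
      rw [Measure.smul_apply, Measure.dirac_apply' _ hA, smul_eq_mul]
      exact ENNReal.mul_ne_top (measure_ne_top _ _) (by
        by_cases h : s ∈ A <;> simp [h, Set.indicator_of_mem, Set.indicator_of_notMem])
  -- numerator
  set N : ℝ → ℝ := fun q => (μ (Set.Ioc y (y + q))).toReal with hNdef
  have hN : ∀ q : ℝ, N q = ∑ s ∈ S, (if s ∈ Set.Ioc y (y + q) then w s else 0) := by
    intro q
    show (μ (Set.Ioc y (y + q))).toReal = _
    rw [hset _ measurableSet_Ioc]
    exact Finset.sum_congr rfl fun s _ => by congr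
  -- denominator
  set D : ℝ → ℝ := fun q => ∑ s ∈ S, (if y < s then w s * min (s - y) q else 0) with hDdef
  have hD : ∀ q : ℝ,
      (∫ x, Set.indicator (Set.Ioi y) (fun x => min (x - y) q) x ∂μ) = D q := by
    intro q
    have hmeas : Measurable (Set.indicator (Set.Ioi y) (fun x : ℝ => min (x - y) q)) :=
      ((measurable_id.sub measurable_const).min measurable_const).indicator measurableSet_Ioi
    rw [hμ, integral_finset_sum_measure]
    · apply Finset.sum_congr rfl
      intro s hs
      rw [integral_smul_measure, integral_dirac]
      by_cases h : y < s
      · simp [Set.indicator_of_mem, h, smul_eq_mul, hw]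
      · simp [Set.indicator_of_notMem, h]
    · intro s hs
      refine Integrable.smul_measure ⟨hmeas.aestronglyMeasurable, ?_⟩ (measure_ne_top μ _)
      simp [HasFiniteIntegral, lintegral_dirac]
  -- support points above y
  set T : Finset ℝ := S.filter (fun s => y < s ∧ μ {s} ≠ 0) with hTdef
  have hTne : T.Nonempty := by
    by_contra h
    rw [Finset.not_nonempty_iff_eq_empty] at h
    have h0 : (μ (Set.Ioi y)).toReal = 0 := by
      rw [hset _ measurableSet_Ioi]
      apply Finset.sum_eq_zero
      intro s hs
      by_cases h1 : s ∈ Set.Ioi y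
      · simp only [h1, if_true]
        by_cases h2 : μ {s} = 0
        · exact (hwz s).2 h2
        · have hsT : s ∈ T := Finset.mem_filter.2 ⟨hs, h1, h2⟩
          rw [h] at hsT
          exact absurd hsT (Finset.notMem_empty s)
      · simp [h1]
    exact absurd h0 (ne_of_gt hty)
  have hTsub : ∀ s ∈ T, s ∈ S ∧ y < s ∧ μ {s} ≠ 0 := by
    intro s hs
    have := Finset.mem_filter.1 hs
    exact ⟨this.1, this.2⟩
  -- D is positive at support offsets
  have hDpos : ∀ s ∈ T, 0 < D (s - y) := by
    intro s hs
    obtain ⟨hsS, hys, hsne⟩ := hTsub s hs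
    apply Finset.sum_pos'
    · intro i _
      by_cases h : y < i
      · simp only [h, if_true]
        exact mul_nonneg (hwnn i) (le_min (by linarith) (by linarith))
      · simp [h]
    · refine ⟨s, hsS, ?_⟩
      simp only [hys, if_true, min_self]
      exact mul_pos (ENNReal.toReal_pos hsne (measure_ne_top μ _)) (sub_pos.2 hys)
  -- D monotone
  have hDmono : ∀ q q' : ℝ, q ≤ q' → D q ≤ D q' := by
    intro q q' hqq
    apply Finset.sum_le_sum
    intro i _
    by_cases h : y < i
    · simp only [h, if_true]
      exact mul_le_mul_of_nonneg_left (min_le_min le_rfl hqq) (hwnn i)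
    · simp [h]
  have hNnn : ∀ q : ℝ, 0 ≤ N q := fun q => ENNReal.toReal_nonneg
  have hDnn : ∀ q : ℝ, 0 < q → 0 ≤ D q := by
    intro q hq
    apply Finset.sum_nonneg
    intro i _
    by_cases h : y < i
    · simp only [h, if_true]
      exact mul_nonneg (hwnn i) (le_min (by linarith) hq.le)
    · simp [h]
  -- choose the maximizer
  obtain ⟨sm, hsmT, hsm⟩ := Finset.exists_max_image T (fun s => N (s - y) / D (s - y)) hTne
  obtain ⟨hsmS, hysm, hsmne⟩ := hTsub sm hsmT
  refine ⟨sm - y, sub_pos.2 hysm, ?_, ?_⟩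
  · rwa [add_sub_cancel]
  · intro q hq
    rw [hD, hD]
    have hRHSeq : (μ (Set.Ioc y (y + (sm - y)))).toReal = N (sm - y) := rfl
    have hLHSeq : (μ (Set.Ioc y (y + q))).toReal = N q := rfl
    rw [hRHSeq, hLHSeq]
    have hRHSnn : 0 ≤ N (sm - y) / D (sm - y) :=
      div_nonneg (hNnn _) (hDnn _ (sub_pos.2 hysm))
    by_cases hT' : (T.filter (fun s => s ≤ y + q)).Nonempty
    · obtain ⟨s2, hs2, hs2max⟩ := Finset.exists_max_image _ id hT'
      rw [Finset.mem_filter] at hs2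
      obtain ⟨hs2T, hs2le⟩ := hs2
      obtain ⟨hs2S, hys2, hs2ne⟩ := hTsub s2 hs2T
      -- N q = N (s2 - y)
      have hNeq : N q = N (s2 - y) := by
        rw [hN, hN]
        apply Finset.sum_congr rfl
        intro s hs
        by_cases h1 : s ∈ Set.Ioc y (y + q)
        · by_cases h2 : μ {s} = 0
          · simp only [h1, if_true]
            rw [(hwz s).2 h2]
            simp
          · have hsT : s ∈ T := Finset.mem_filter.2 ⟨hs, h1.1, h2⟩
            have : s ≤ s2 := hs2max s (Finset.mem_filter.2 ⟨hsT, h1.2⟩)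
            have h3 : s ∈ Set.Ioc y (y + (s2 - y)) := ⟨h1.1, by linarith⟩
            rw [if_pos h1, if_pos h3]
        · have h3 : s ∉ Set.Ioc y (y + (s2 - y)) := by
            intro hc
            exact h1 ⟨hc.1, by have := hc.2; linarith⟩
          rw [if_neg h1, if_neg h3]
      have hq2 : s2 - y ≤ q := by linarith
      have hD2pos : 0 < D (s2 - y) := hDpos s2 hs2T
      have hDqpos : 0 < D q := lt_of_lt_of_le hD2pos (hDmono _ _ hq2)
      calc N q / D q = N (s2 - y) / D q := by rw [hNeq]
        _ ≤ N (s2 - y) / D (s2 - y) := by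
            gcongr
            exact hDmono _ _ hq2
        _ ≤ N (sm - y) / D (sm - y) := hsm s2 hs2T
    · -- no support point in (y, y+q]: numerator is 0
      have hN0 : N q = 0 := by
        rw [hN]
        apply Finset.sum_eq_zero
        intro s hs
        by_cases h1 : s ∈ Set.Ioc y (y + q)
        · simp only [h1, if_true]
          by_cases h2 : μ {s} = 0
          · exact (hwz s).2 h2
          · have hsT : s ∈ T := Finset.mem_filter.2 ⟨hs, h1.1, h2⟩
            exact (hT' ⟨s, Finset.mem_filter.2 ⟨hsT, h1.2⟩⟩).elim
        · simp [h1]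
      rw [hN0, zero_div]
      exact hRHSnn
end
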